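/- Let α > 0, and let L_A, L_B, σ_A², σ_B² be nonnegative with L_A + σ_A² > 0 and L_B + σ_B² > 0. Define E(n_A, n_B) = [n_B^{2α}(L_B+σ_B²) + n_A^{2α}(L_A+σ_A²)]/(n_A^α+n_B^α)² for n_A, n_B > 0. Then at every point (n_A, n_B) with n_A, n_B > 0, the partial derivatives ∂E/∂n_A and ∂E/∂n_B have opposite signs or are both zero; in particular it is never the case that both partial derivatives are strictly negative. -/

import Mathlib

open Real

lemma key_deriv (α A K c : ℝ) (hc : 0 < c) (x : ℝ) (hx : 0 < x) :
    deriv (fun t : ℝ => (t ^ (2*α) * A + K) / (t ^ α + c) ^ 2) x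
      = (2*α*x^α/(x*(x^α+c)^3)) * (x^α * c * A - K) := by
  have hxa : (0:ℝ) < x ^ α := Real.rpow_pos_of_pos hx α
  have hden : x ^ α + c ≠ 0 := by positivity
  have h1 : HasDerivAt (fun t : ℝ => t ^ (2*α)) ((2*α) * x ^ (2*α - 1)) x :=
    Real.hasDerivAt_rpow_const (Or.inl hx.ne')
  have h2 : HasDerivAt (fun t : ℝ => t ^ α) (α * x ^ (α - 1)) x :=
    Real.hasDerivAt_rpow_const (Or.inl hx.ne')
  have hnum : HasDerivAt (fun t : ℝ => t ^ (2*α) * A + K)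
      ((2*α) * x ^ (2*α - 1) * A) x := (h1.mul_const A).add_const K
  have hden2 : HasDerivAt (fun t : ℝ => (t ^ α + c) ^ 2)
      (2 * (x ^ α + c) ^ 1 * (α * x ^ (α - 1))) x := by
    simpa using (h2.add_const c).fun_pow 2
  have hpow : ((x ^ α + c) ^ 2) ≠ 0 := pow_ne_zero 2 hden
  have hd := (hnum.fun_div hden2 hpow).deriv
  rw [hd]
  have e1 : x ^ (2*α) = (x ^ α) ^ 2 := by
    rw [mul_comm, Real.rpow_mul hx.le, Real.rpow_two]
  have e2 : x ^ (2*α - 1) = (x ^ α) ^ 2 / x := by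
    rw [Real.rpow_sub hx, Real.rpow_one, e1]
  have e3 : x ^ (α - 1) = x ^ α / x := by
    rw [Real.rpow_sub hx, Real.rpow_one]
  rw [e1, e2, e3]
  field_simp
  ring

/-- at every point the two partial derivatives of the team error have
opposite signs or are both zero; in particular they are never both strictly negative. -/
theorem stmt_1 (α LA LB sA2 sB2 : ℝ)
    (hα : 0 < α)
    (hLA : 0 ≤ LA) (hLB : 0 ≤ LB) (hsA : 0 ≤ sA2) (hsB : 0 ≤ sB2)
    (hA : 0 < LA + sA2) (hB : 0 < LB + sB2)
    (E : ℝ → ℝ → ℝ)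
    (hE : ∀ x y : ℝ, E x y =
      (y ^ (2 * α) * (LB + sB2) + x ^ (2 * α) * (LA + sA2)) / (x ^ α + y ^ α) ^ 2) :
    ∀ nA nB : ℝ, 0 < nA → 0 < nB →
      ((deriv (fun x => E x nB) nA < 0 ∧ 0 < deriv (fun y => E nA y) nB) ∨
       (0 < deriv (fun x => E x nB) nA ∧ deriv (fun y => E nA y) nB < 0) ∨
       (deriv (fun x => E x nB) nA = 0 ∧ deriv (fun y => E nA y) nB = 0)) ∧
      ¬ (deriv (fun x => E x nB) nA < 0 ∧ deriv (fun y => E nA y) nB < 0) := by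
  intro nA nB hnA hnB
  set a := nA ^ α with ha_def
  set b := nB ^ α with hb_def
  have ha : (0:ℝ) < a := Real.rpow_pos_of_pos hnA α
  have hb : (0:ℝ) < b := Real.rpow_pos_of_pos hnB α
  have eA2 : nA ^ (2*α) = a ^ 2 := by
    rw [ha_def, mul_comm, Real.rpow_mul hnA.le, Real.rpow_two]
  have eB2 : nB ^ (2*α) = b ^ 2 := by
    rw [hb_def, mul_comm, Real.rpow_mul hnB.le, Real.rpow_two]
  -- x-partial derivative
  have hfx : (fun x => E x nB)
      = fun x : ℝ => (x ^ (2*α) * (LA + sA2) + nB ^ (2*α) * (LB + sB2)) / (x ^ α + b) ^ 2 := by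
    funext x; rw [hE, ← hb_def]; ring_nf
  have hdx : deriv (fun x => E x nB) nA
      = (2*α*a/(nA*(a+b)^3)) * (a * b * (LA + sA2) - nB ^ (2*α) * (LB + sB2)) := by
    rw [hfx]; exact key_deriv α (LA + sA2) (nB ^ (2*α) * (LB + sB2)) b hb nA hnA
  -- y-partial derivative
  have hfy : (fun y => E nA y)
      = fun y : ℝ => (y ^ (2*α) * (LB + sB2) + nA ^ (2*α) * (LA + sA2)) / (y ^ α + a) ^ 2 := by
    funext y; rw [hE, ← ha_def]; ring_nf
  have hdy : deriv (fun y => E nA y) nB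
      = (2*α*b/(nB*(a+b)^3)) * (b * a * (LB + sB2) - nA ^ (2*α) * (LA + sA2)) := by
    rw [hfy]
    have := key_deriv α (LB + sB2) (nA ^ (2*α) * (LA + sA2)) a ha nB hnB
    rw [this, ← hb_def]; ring_nf
  set D := a * (LA + sA2) - b * (LB + sB2) with hD_def
  have hdx' : deriv (fun x => E x nB) nA = (2*α*a*b/(nA*(a+b)^3)) * D := by
    rw [hdx, eB2, hD_def]; ring
  have hdy' : deriv (fun y => E nA y) nB = -((2*α*a*b/(nB*(a+b)^3)) * D) := by
    rw [hdy, eA2, hD_def]; ring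
  have hP : (0:ℝ) < 2*α*a*b/(nA*(a+b)^3) := by positivity
  have hQ : (0:ℝ) < 2*α*a*b/(nB*(a+b)^3) := by positivity
  rcases lt_trichotomy D 0 with hD | hD | hD
  · have h1 : deriv (fun x => E x nB) nA < 0 := by
      rw [hdx']; exact mul_neg_of_pos_of_neg hP hD
    have h2 : 0 < deriv (fun y => E nA y) nB := by
      rw [hdy']; have := mul_neg_of_pos_of_neg hQ hD; linarith
    exact ⟨Or.inl ⟨h1, h2⟩, fun h => absurd h.2 (not_lt.mpr h2.le)⟩
  · have h1 : deriv (fun x => E x nB) nA = 0 := by rw [hdx', hD, mul_zero]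
    have h2 : deriv (fun y => E nA y) nB = 0 := by rw [hdy', hD, mul_zero, neg_zero]
    exact ⟨Or.inr (Or.inr ⟨h1, h2⟩), fun h => absurd h.1 (by rw [h1]; exact lt_irrefl 0)⟩
  · have h1 : 0 < deriv (fun x => E x nB) nA := by
      rw [hdx']; exact mul_pos hP hD
    have h2 : deriv (fun y => E nA y) nB < 0 := by
      rw [hdy']; have := mul_pos hQ hD; linarith
    exact ⟨Or.inr (Or.inl ⟨h1, h2⟩), fun h => absurd h.1 (not_lt.mpr h1.le)⟩
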